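/- (Opening width of the equi-utility cone.) Let λ1, λ2, w1, w2 > 0, α ≥ 0, ε ≥ 0 with α + ε > 0, and set θ1 = arctan(−ε·w1/(α·λ2 + ε·w2)) and θ2 = π/2 + arctan(ε·w2/(α·λ1 + ε·w1)). Then π/2 ≤ θ2 − θ1 ≤ π; moreover θ2 − θ1 = π/2 if and only if ε = 0, and θ2 − θ1 = π if and only if α = 0 (and in all remaining cases, i.e., α > 0 and ε > 0, one has π/2 < θ2 − θ1 < π). -/

import Mathlib

open Real

/-- Opening width of the equi-utility cone of `S_gen`: `π/2 ≤ θ2 − θ1 ≤ π`, with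
`θ2 − θ1 = π/2 ↔ ε = 0`, `θ2 − θ1 = π ↔ α = 0`, and strict inequalities when
`α > 0` and `ε > 0`. -/
theorem sgen_cone_opening_width (lam1 lam2 w1 w2 α ε : ℝ)
    (hl1 : 0 < lam1) (hl2 : 0 < lam2) (hw1 : 0 < w1) (hw2 : 0 < w2)
    (hα : 0 ≤ α) (hε : 0 ≤ ε) (hαε : 0 < α + ε)
    (θ1 θ2 : ℝ)
    (hθ1 : θ1 = Real.arctan (-(ε * w1) / (α * lam2 + ε * w2)))
    (hθ2 : θ2 = Real.pi / 2 + Real.arctan (ε * w2 / (α * lam1 + ε * w1))) :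
    (Real.pi / 2 ≤ θ2 - θ1 ∧ θ2 - θ1 ≤ Real.pi) ∧
    (θ2 - θ1 = Real.pi / 2 ↔ ε = 0) ∧
    (θ2 - θ1 = Real.pi ↔ α = 0) ∧
    (0 < α → 0 < ε → Real.pi / 2 < θ2 - θ1 ∧ θ2 - θ1 < Real.pi) := by
  have hd1 : 0 < α * lam1 + ε * w1 := by
    rcases hα.eq_or_lt with h | h
    · nlinarith
    · nlinarith [mul_nonneg hε hw1.le]
  have hd2 : 0 < α * lam2 + ε * w2 := by
    rcases hα.eq_or_lt with h | h
    · nlinarith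
    · nlinarith [mul_nonneg hε hw2.le]
  set u := ε * w2 / (α * lam1 + ε * w1) with hu
  set v := ε * w1 / (α * lam2 + ε * w2) with hv
  have hθ : θ2 - θ1 = Real.pi / 2 + (Real.arctan u + Real.arctan v) := by
    rw [hθ1, hθ2, neg_div, Real.arctan_neg]; ring
  have hpi : 0 < Real.pi := Real.pi_pos
  rcases hε.eq_or_lt with hε0 | hε0
  · -- ε = 0
    have hu0 : u = 0 := by rw [hu, ← hε0]; simp
    have hv0 : v = 0 := by rw [hv, ← hε0]; simp
    have hα0 : 0 < α := by linarith
    have hθ' : θ2 - θ1 = Real.pi / 2 := by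
      rw [hθ, hu0, hv0, Real.arctan_zero]; ring
    refine ⟨⟨le_of_eq hθ'.symm, by linarith⟩, ⟨fun _ => hε0.symm, fun _ => hθ'⟩,
      ⟨fun h => absurd h (by linarith), fun h => absurd h (by linarith)⟩,
      fun h1 h2 => absurd h2 (by linarith)⟩
  · -- ε > 0
    have hupos : 0 < u := div_pos (mul_pos hε0 hw2) hd1
    have hvpos : 0 < v := div_pos (mul_pos hε0 hw1) hd2
    have hau : 0 < Real.arctan u := by
      have := Real.arctan_strictMono hupos; rwa [Real.arctan_zero] at this
    have hav : 0 < Real.arctan v := by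
      have := Real.arctan_strictMono hvpos; rwa [Real.arctan_zero] at this
    rcases hα.eq_or_lt with hα0 | hα0
    · -- α = 0
      have hvu : v = u⁻¹ := by
        rw [hu, hv, ← hα0]
        rw [inv_div]
        field_simp
        ring
      have hS : Real.arctan u + Real.arctan v = Real.pi / 2 := by
        rw [hvu, Real.arctan_inv_of_pos hupos]; ring
      have hθ' : θ2 - θ1 = Real.pi := by rw [hθ, hS]; ring
      refine ⟨⟨by linarith, le_of_eq hθ'⟩,
        ⟨fun h => absurd h (by rw [hθ']; intro h'; linarith), fun h => absurd h (by linarith)⟩,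
        ⟨fun _ => hα0.symm, fun _ => hθ'⟩,
        fun h1 h2 => absurd h1 (by linarith)⟩
    · -- α > 0, ε > 0
      have huv : u * v < 1 := by
        rw [hu, hv, div_mul_div_comm, div_lt_one (mul_pos hd1 hd2)]
        nlinarith [mul_pos (mul_pos hα0 hl1) (mul_pos hε0 hw2),
          mul_pos (mul_pos hε0 hw1) (mul_pos hα0 hl2),
          mul_pos (mul_pos hα0 hl1) (mul_pos hα0 hl2)]
      have hSlt : Real.arctan u + Real.arctan v < Real.pi / 2 :=
        Real.arctan_add_arctan_lt_pi_div_two huv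
      have hSgt : 0 < Real.arctan u + Real.arctan v := by linarith
      refine ⟨⟨by linarith, by linarith⟩,
        ⟨fun h => absurd h (by rw [hθ]; intro h'; linarith), fun h => absurd h (by linarith)⟩,
        ⟨fun h => absurd h (by rw [hθ]; intro h'; linarith), fun h => absurd h (by linarith)⟩,
        fun _ _ => ⟨by linarith, by linarith⟩⟩
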